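/- In a decreasing consumption MDP, any memoryless strategy σ which in every state with Safe_M(s) < ∞ selects an action safe in s (per the definition below) is Safe_M(s)-safe in every state s. More precisely, for every state s with Safe_M(s) < ∞ and every σ-compatible finite path α starting at s, EnergyLevel_{Safe_M(s)}(α) ≠ ⊥ and EnergyLevel_{Safe_M(s)}(α) ≥ Safe_M(last(α)). -/

import Mathlib

open scoped Classical NNReal ENat

noncomputable section

/-- A consumption Markov decision process. -/
structure CMDP (S A : Type) [Fintype S] where
  Δ : S → A → S → NNReal
  Δ_sum : ∀ s a, (∑ t, Δ s a t) = 1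
  C : S → A → ℕ
  R : Set S
  cap : ℕ

namespace CMDP

variable {S A : Type} [Fintype S]

/-- Strategies map histories (initial state, list of action/state steps) to actions. -/
abbrev Strat (S A : Type) : Type := S × List (A × S) → A

/-- Last state of a history. -/
def lastState (s : S) : List (A × S) → S
  | [] => s
  | (_, t) :: rest => lastState t rest

/-- The `i`-th state (0-indexed) of a history. -/
def stateAt (s : S) (steps : List (A × S)) (i : ℕ) : S :=
  (s :: steps.map Prod.snd).getD i s

variable (M : CMDP S A)

def Succ (s : S) (a : A) : Set S := {t | 0 < M.Δ s a t}

/-- Total consumption along a finite path. -/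
def consAux : S → List (A × S) → ℕ
  | _, [] => 0
  | s, (a, t) :: rest => M.C s a + consAux t rest

/-- One step of the energy-level update. -/
def levelStep (s : S) (a : A) (l : ℕ) : Option ℕ :=
  if s ∈ M.R then (if M.C s a ≤ M.cap then some (M.cap - M.C s a) else none)
  else (if M.C s a ≤ l then some (l - M.C s a) else none)

def energyFrom : Option ℕ → S → List (A × S) → Option ℕ
  | none, _, _ => none
  | some l, _, [] => some l
  | some l, s, (a, t) :: rest => energyFrom (M.levelStep s a l) t rest

/-- Energy level of a history initialized by `d` (`none` = ⊥, exhaustion). -/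
def energy (d : ℕ) (s : S) (steps : List (A × S)) : Option ℕ :=
  M.energyFrom (some d) s steps

/-- Validity of a finite path. -/
def ValidPath : S → List (A × S) → Prop
  | _, [] => True
  | s, (a, t) :: rest => t ∈ M.Succ s a ∧ ValidPath t rest

/-- First state of a run. -/
def runState (ρ : ℕ → S × A) (i : ℕ) : S := (ρ i).1

/-- The finite prefix of a run with `i` steps. -/
def prefixSteps (ρ : ℕ → S × A) (i : ℕ) : List (A × S) :=
  (List.range i).map fun k => ((ρ k).2, (ρ (k + 1)).1)

def IsRun (ρ : ℕ → S × A) : Prop := ∀ i, (ρ (i + 1)).1 ∈ M.Succ (ρ i).1 (ρ i).2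

/-- A run is `d`-safe if the energy level of every finite prefix is defined. -/
def DSafe (d : ℕ) (ρ : ℕ → S × A) : Prop :=
  ∀ i, M.energy d (runState ρ 0) (prefixSteps ρ i) ≠ none

/-- A run is compatible with a strategy. -/
def Compat (σ : Strat S A) (ρ : ℕ → S × A) : Prop :=
  M.IsRun ρ ∧ ∀ i, (ρ i).2 = σ (runState ρ 0, prefixSteps ρ i)

def CompatFrom (σ : Strat S A) (s : S) (ρ : ℕ → S × A) : Prop :=
  M.Compat σ ρ ∧ runState ρ 0 = s

/-- A strategy is `d`-safe in `s` if all compatible runs from `s` are `d`-safe. -/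
def SafeStrat (σ : Strat S A) (d : ℕ) (s : S) : Prop :=
  ∀ ρ, M.CompatFrom σ s ρ → M.DSafe d ρ

/-- A finite history compatible with a strategy. -/
def CompatHist (σ : Strat S A) (s : S) (steps : List (A × S)) : Prop :=
  M.ValidPath s steps ∧
    ∀ (i : ℕ) (h : i < steps.length), (steps.get ⟨i, h⟩).1 = σ (s, steps.take i)

def Memoryless (σ : Strat S A) : Prop :=
  ∀ h₁ h₂ : S × List (A × S), lastState h₁.1 h₁.2 = lastState h₂.1 h₂.2 → σ h₁ = σ h₂

/-- Cost of a run up to the first visit of `T` (∞ if `T` is never visited). -/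
def reachCost (T : Set S) (ρ : ℕ → S × A) : ℕ∞ :=
  ⨅ i ∈ {i : ℕ | runState ρ i ∈ T}, (M.consAux (runState ρ 0) (prefixSteps ρ i) : ℕ∞)

/-- `i`-step bounded reachability cost. -/
def reachCostBdd (T : Set S) (n : ℕ) (ρ : ℕ → S × A) : ℕ∞ :=
  ⨅ i ∈ {i : ℕ | i ≤ n ∧ runState ρ i ∈ T}, (M.consAux (runState ρ 0) (prefixSteps ρ i) : ℕ∞)

/-- Reachability cost requiring at least one step. -/
def reachCostPlus (T : Set S) (ρ : ℕ → S × A) : ℕ∞ :=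
  ⨅ i ∈ {i : ℕ | 1 ≤ i ∧ runState ρ i ∈ T}, (M.consAux (runState ρ 0) (prefixSteps ρ i) : ℕ∞)

def reachCostStrat (T : Set S) (σ : Strat S A) (s : S) : ℕ∞ :=
  ⨆ ρ ∈ {ρ | M.CompatFrom σ s ρ}, M.reachCost T ρ

def minReach (T : Set S) (s : S) : ℕ∞ :=
  ⨅ σ : Strat S A, M.reachCostStrat T σ s

def minReachBdd (T : Set S) (n : ℕ) (s : S) : ℕ∞ :=
  ⨅ σ : Strat S A, ⨆ ρ ∈ {ρ | M.CompatFrom σ s ρ}, M.reachCostBdd T n ρ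

def minReachPlus (T : Set S) (s : S) : ℕ∞ :=
  ⨅ σ : Strat S A, ⨆ ρ ∈ {ρ | M.CompatFrom σ s ρ}, M.reachCostPlus T ρ

/-- The Bellman operator for minimum cost reachability of `T`. -/
def bellman (T : Set S) (v : S → ℕ∞) : S → ℕ∞ := fun s =>
  if s ∈ T then 0 else ⨅ a : A, ((M.C s a : ℕ∞) + ⨆ t ∈ M.Succ s a, v t)

/-- The initial vector: `0` on `T`, `∞` elsewhere. -/
def xTvec (T : Set S) : S → ℕ∞ := fun s => if s ∈ T then 0 else ⊤

/-- Length of the longest simple path of `M`. -/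
def longestSimple : ℕ :=
  sSup {n | ∃ (s : S) (steps : List (A × S)),
    M.ValidPath s steps ∧ (s :: steps.map Prod.snd).Nodup ∧ steps.length = n}

/-- The augmented CMDP `M̃` with a fresh non-reload copy of every state. -/
def augment : CMDP (S ⊕ S) A where
  Δ := fun x a t =>
    Sum.elim (fun u => M.Δ (Sum.elim id id x) a u) (fun _ => (0 : NNReal)) t
  Δ_sum := by
    intro x a
    rw [Fintype.sum_sum_type]
    simp [M.Δ_sum (Sum.elim id id x) a]
  C := fun x a => M.C (Sum.elim id id x) a
  R := Sum.inl '' M.R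
  cap := M.cap

/-- Truncation to `0` on reload states. -/
def strunc (x : S → ℕ∞) : S → ℕ∞ := fun s => if s ∈ M.R then 0 else x s

/-- The truncated Bellman-like operator `G`. -/
def opG (v : S → ℕ∞) : S → ℕ∞ := fun s =>
  ⨅ a : A, ((M.C s a : ℕ∞) + ⨆ t ∈ M.Succ s a, M.strunc v t)

/-- Minimal `d ≤ cap` such that some strategy is `d`-safe in `s` (∞ if none). -/
def safeVec (s : S) : ℕ∞ :=
  ⨅ d ∈ {d : ℕ | d ≤ M.cap ∧ ∃ σ : Strat S A, M.SafeStrat σ d s}, (d : ℕ∞)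

/-- An action safe in a state. -/
def SafeAction (s : S) (a : A) : Prop :=
  (s ∉ M.R ∧ ((M.C s a : ℕ∞) + ⨆ t ∈ M.Succ s a, M.safeVec t) ≤ M.safeVec s) ∨
  (s ∈ M.R ∧ ((M.C s a : ℕ∞) + ⨆ t ∈ M.Succ s a, M.safeVec t) ≤ (M.cap : ℕ∞))

/-- A CMDP is decreasing if every (valid) simple cycle has positive consumption. -/
def Decreasing : Prop :=
  ∀ (s : S) (steps : List (A × S)), M.ValidPath s steps → steps ≠ [] →
    lastState s steps = s → (s :: (steps.map Prod.snd).dropLast).Nodup →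
    0 < M.consAux s steps

/-- Selection according to a selection rule: the action of the largest
element of the domain below the counter value. -/
def selectFrom (φ : ℕ → Option A) (m : ℕ) (a₀ : A) : A :=
  (((List.range (m + 1)).reverse).findSome? φ).getD a₀

/-- The finite counter strategy `Σ^y` induced by a counter selector. -/
def counterStrategy (sel : S → ℕ → Option A) (y : S → ℕ) (a₀ : A) : Strat S A :=
  fun h =>
    match M.energy (y h.1) h.1 h.2 with
    | some m => selectFrom (sel (lastState h.1 h.2)) m a₀
    | none => a₀

/-- The `SPR` value of an action. -/
def spr (s : S) (a : A) (x : S → ℕ∞) : ℕ∞ :=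
  (M.C s a : ℕ∞) +
    ⨅ t ∈ M.Succ s a, max (x t) (⨆ t' ∈ {t' ∈ M.Succ s a | t' ≠ t}, M.safeVec t')

def opA (T : Set S) (x : S → ℕ∞) : S → ℕ∞ := fun s =>
  if s ∈ T then M.safeVec s else ⨅ a : A, M.spr s a x

/-- Two-sided truncation. -/
def trunc2 (x : S → ℕ∞) : S → ℕ∞ := fun s =>
  if (M.cap : ℕ∞) < x s then ⊤ else if s ∈ M.R then 0 else x s

def opB (T : Set S) (x : S → ℕ∞) : S → ℕ∞ := M.trunc2 (M.opA T x)

def yTvec (T : Set S) : S → ℕ∞ := fun s => if s ∈ T then M.safeVec s else ⊤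

def VisitsWithin (T : Set S) (i : ℕ) (ρ : ℕ → S × A) : Prop :=
  ∃ j ≤ i, runState ρ j ∈ T

def Visits (T : Set S) (ρ : ℕ → S × A) : Prop := ∃ j, runState ρ j ∈ T

/-- Minimal `ℓ ≤ cap` s.t. some `ℓ`-safe strategy from `s` has a run visiting `T`
within the first `i` steps. -/
def safePRBdd (T : Set S) (i : ℕ) (s : S) : ℕ∞ :=
  ⨅ ℓ ∈ {ℓ : ℕ | ℓ ≤ M.cap ∧ ∃ σ : Strat S A, M.SafeStrat σ ℓ s ∧
      ∃ ρ, M.CompatFrom σ s ρ ∧ VisitsWithin T i ρ}, (ℓ : ℕ∞)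

/-- Minimal `ℓ ≤ cap` s.t. some `ℓ`-safe strategy from `s` has a run visiting `T`. -/
def safePR (T : Set S) (s : S) : ℕ∞ :=
  ⨅ ℓ ∈ {ℓ : ℕ | ℓ ≤ M.cap ∧ ∃ σ : Strat S A, M.SafeStrat σ ℓ s ∧
      ∃ ρ, M.CompatFrom σ s ρ ∧ Visits T ρ}, (ℓ : ℕ∞)

/-- Replace the set of reload states. -/
def setReload (R' : Set S) : CMDP S A := { M with R := R' }

/-- Probability of a finite continuation of a history under a strategy. -/
def pathProbAux (σ : Strat S A) : S × List (A × S) → List (A × S) → NNReal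
  | _, [] => 1
  | h, (a, t) :: rest =>
      (if σ h = a then M.Δ (lastState h.1 h.2) a t else 0) *
        pathProbAux σ (h.1, h.2 ++ [(a, t)]) rest

/-- Probability that the length-`n` prefix of a run from `s` under `σ`
satisfies the predicate `P`. -/
def probEvent [Fintype A] (σ : Strat S A) (s : S) (n : ℕ) (P : List (A × S) → Prop) : NNReal :=
  ∑ f : Fin n → A × S,
    if P (List.ofFn f) then M.pathProbAux σ (s, []) (List.ofFn f) else 0

/-- Number of visits of `T` along a finite path. -/
def visitCount (T : Set S) (s : S) (steps : List (A × S)) : ℕ :=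
  (s :: steps.map Prod.snd).countP (fun x => decide (x ∈ T))

/-- `T` is visited infinitely often with probability one under `σ` from `s`. -/
def buchiAS [Fintype A] (σ : Strat S A) (s : S) (T : Set S) : Prop :=
  ∀ k : ℕ,
    (⨆ n : ℕ, M.probEvent σ s n (fun steps => k ≤ visitCount T s steps)) = 1

/-- Minimal `d ≤ cap` s.t. some strategy is `d`-safe in `s` and visits `T`
infinitely often almost surely. -/
def safeBuchiVec [Fintype A] (T : Set S) (s : S) : ℕ∞ :=
  ⨅ d ∈ {d : ℕ | d ≤ M.cap ∧ ∃ σ : Strat S A, M.SafeStrat σ d s ∧ M.buchiAS σ s T}, (d : ℕ∞)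

/-- Iterated memory update of a memory structure. -/
def updStar {Mem : Type} (upd : Mem → S → A → S → Mem) : Mem → S → List (A × S) → Mem
  | m, _, [] => m
  | m, s, (a, t) :: rest => updStar upd (upd m s a t) t rest

/-- Finite-memory strategies: encodable by a finite memory structure. -/
def FinMemStrategy (σ : Strat S A) : Prop :=
  ∃ (Mem : Type) (_ : Finite Mem) (init : S → Mem) (upd : Mem → S → A → S → Mem)
    (nxt : Mem → S → A),
    ∀ h : S × List (A × S), σ h = nxt (updStar upd (init h.1) h.1 h.2) (lastState h.1 h.2)

/-- The joint run `α ⊙ ρ`. -/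
def jointRun (s : S) (steps : List (A × S)) (ρ : ℕ → S × A) : ℕ → S × A :=
  fun i => if h : i < steps.length then (stateAt s steps i, (steps.get ⟨i, h⟩).1)
           else ρ (i - steps.length)

end CMDP

lemma energyFrom_mono {S A : Type} [Fintype S] (M : CMDP S A) :
    ∀ (steps : List (A × S)) (s : S) (l₁ l₂ e₂ : ℕ), l₂ ≤ l₁ →
      M.energyFrom (some l₂) s steps = some e₂ →
      ∃ e₁, M.energyFrom (some l₁) s steps = some e₁ ∧ e₂ ≤ e₁ := by
  intro steps
  induction steps with
  | nil =>
    intro s l₁ l₂ e₂ hle h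
    simp only [CMDP.energyFrom, Option.some.injEq] at h
    exact ⟨l₁, rfl, h ▸ hle⟩
  | cons p rest ih =>
    obtain ⟨a, t⟩ := p
    intro s l₁ l₂ e₂ hle h
    simp only [CMDP.energyFrom] at h ⊢
    by_cases hR : s ∈ M.R
    · have : M.levelStep s a l₁ = M.levelStep s a l₂ := by
        simp [CMDP.levelStep, hR]
      rw [this]
      exact ⟨e₂, h, le_refl _⟩
    · by_cases hC : M.C s a ≤ l₂
      · have h1 : M.levelStep s a l₂ = some (l₂ - M.C s a) := by
          simp [CMDP.levelStep, hR, hC]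
        have h2 : M.levelStep s a l₁ = some (l₁ - M.C s a) := by
          simp [CMDP.levelStep, hR, le_trans hC hle]
        rw [h1] at h
        rw [h2]
        exact ih t (l₁ - M.C s a) (l₂ - M.C s a) e₂ (Nat.sub_le_sub_right hle _) h
      · rw [show M.levelStep s a l₂ = none by simp [CMDP.levelStep, hR, hC]] at h
        simp [CMDP.energyFrom] at h

open CMDP in
/-- A memoryless strategy that always selects safe actions is `Safe(s)`-safe in
every state `s`: along every compatible finite path the energy level is defined
and dominates the safe value of the last state. -/
theorem memoryless_safe_strategy {S A : Type} [Fintype S] (M : CMDP S A)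
    (hdec : M.Decreasing) (σ : Strat S A) (hml : Memoryless σ)
    (hsel : ∀ s : S, M.safeVec s < ⊤ → M.SafeAction s (σ (s, []))) :
    ∀ (s : S) (d : ℕ), M.safeVec s = (d : ℕ∞) →
      ∀ steps : List (A × S), M.CompatHist σ s steps →
        ∃ l : ℕ, M.energy d s steps = some l ∧
          M.safeVec (lastState s steps) ≤ (l : ℕ∞) := by
  intro s d hd steps
  induction steps generalizing s d with
  | nil =>
    intro _
    exact ⟨d, rfl, le_of_eq hd⟩
  | cons p rest ih =>
    obtain ⟨a, t⟩ := p
    rintro ⟨⟨hSucc, hvr⟩, hcomp⟩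
    have ha : a = σ (s, []) := by
      have := hcomp 0 (by simp)
      simpa using this
    have hch : M.CompatHist σ t rest := by
      refine ⟨hvr, ?_⟩
      intro i hi
      have h1 := hcomp (i + 1) (by simpa using Nat.succ_lt_succ hi)
      simp only [List.get_cons_succ, List.take_succ_cons] at h1
      rw [h1]
      exact (hml (t, rest.take i) (s, (a, t) :: rest.take i) rfl).symm
    have hlt : M.safeVec s < ⊤ := by rw [hd]; exact WithTop.coe_lt_top d
    have hsa := hsel s hlt
    rw [← ha] at hsa
    have hts : M.safeVec t ≤ ⨆ t' ∈ M.Succ s a, M.safeVec t' := le_biSup _ hSucc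
    rcases hsa with ⟨hR, hle⟩ | ⟨hR, hle⟩
    · have h1 : (M.C s a : ℕ∞) + M.safeVec t ≤ (d : ℕ∞) := by
        rw [← hd]; exact le_trans (add_le_add (le_refl _) hts) hle
      have htop : M.safeVec t ≠ ⊤ := by
        intro h; rw [h] at h1; simp at h1
      obtain ⟨d', hd0⟩ := WithTop.ne_top_iff_exists.mp htop
      have hd' : M.safeVec t = (d' : ℕ∞) := hd0.symm
      rw [hd'] at h1
      have h2 : M.C s a + d' ≤ d := by exact_mod_cast h1
      have hC : M.C s a ≤ d := le_trans (Nat.le_add_right _ _) h2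
      obtain ⟨l', hl', hsl'⟩ := ih t d' hd' hch
      obtain ⟨l, hl, hll⟩ := energyFrom_mono M rest t (d - M.C s a) d' l'
        (by omega) hl'
      refine ⟨l, ?_, ?_⟩
      · show M.energyFrom (some d) s ((a, t) :: rest) = some l
        simp only [CMDP.energyFrom, CMDP.levelStep, hR, if_neg hR, if_pos hC]
        exact hl
      · exact le_trans hsl' (by exact_mod_cast hll)
    · have h1 : (M.C s a : ℕ∞) + M.safeVec t ≤ (M.cap : ℕ∞) :=
        le_trans (add_le_add (le_refl _) hts) hle
      have htop : M.safeVec t ≠ ⊤ := by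
        intro h; rw [h] at h1; simp at h1
      obtain ⟨d', hd0⟩ := WithTop.ne_top_iff_exists.mp htop
      have hd' : M.safeVec t = (d' : ℕ∞) := hd0.symm
      rw [hd'] at h1
      have h2 : M.C s a + d' ≤ M.cap := by exact_mod_cast h1
      have hC : M.C s a ≤ M.cap := le_trans (Nat.le_add_right _ _) h2
      obtain ⟨l', hl', hsl'⟩ := ih t d' hd' hch
      obtain ⟨l, hl, hll⟩ := energyFrom_mono M rest t (M.cap - M.C s a) d' l'
        (by omega) hl'
      refine ⟨l, ?_, ?_⟩
      · show M.energyFrom (some d) s ((a, t) :: rest) = some l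
        simp only [CMDP.energyFrom, CMDP.levelStep, if_pos hR, if_pos hC]
        exact hl
      · exact le_trans hsl' (by exact_mod_cast hll)
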